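/- A triangle-free graph G has an error-correcting identifying code if and only if G is twin-free, δ(G) ≥ 2, and G has no two adjacent degree-2 vertices. -/

import Mathlib

open SimpleGraph

variable {V : Type*}

/-- Closed neighborhood of `v` in `G`. -/
def closedNbhd (G : SimpleGraph V) (v : V) : Set V := insert v (G.neighborSet v)

/-- `S` is an error-correcting identifying code for `G`: every vertex is 3-dominated
and every pair of distinct vertices is 3-distinguished. -/
def IsErrIC (G : SimpleGraph V) (S : Set V) : Prop :=
  (∀ v : V, 3 ≤ (closedNbhd G v ∩ S).ncard) ∧
  ∀ u v : V, u ≠ v → 3 ≤ (symmDiff (closedNbhd G u ∩ S) (closedNbhd G v ∩ S)).ncard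

/-- `G` has no closed twins and no open twins. -/
def TwinFree (G : SimpleGraph V) : Prop :=
  ∀ u v : V, u ≠ v →
    closedNbhd G u ≠ closedNbhd G v ∧ G.neighborSet u ≠ G.neighborSet v

lemma mem_closedNbhd' {G : SimpleGraph V} {v w : V} :
    w ∈ closedNbhd G v ↔ w = v ∨ G.Adj v w := by
  simp [closedNbhd]

lemma tri_free {G : SimpleGraph V} (hT : G.CliqueFree 3) {a b c : V}
    (hab : G.Adj a b) (hac : G.Adj a c) (hbc : G.Adj b c) : False := by
  classical
  exact hT {a,b,c} (is3Clique_triple_iff.mpr ⟨hab, hac, hbc⟩)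

lemma closedNbhd_ncard [Fintype V] (G : SimpleGraph V) (v : V) :
    (closedNbhd G v).ncard = (G.neighborSet v).ncard + 1 :=
  Set.ncard_insert_of_notMem (by simp) (Set.toFinite _)

theorem stmt5 [Fintype V] (G : SimpleGraph V) (hT : G.CliqueFree 3) :
    (∃ S : Set V, IsErrIC G S) ↔
      (TwinFree G ∧
       (∀ v : V, 2 ≤ (G.neighborSet v).ncard) ∧
       (∀ u v : V, G.Adj u v →
         ¬((G.neighborSet u).ncard = 2 ∧ (G.neighborSet v).ncard = 2))) := by
  classical
  constructor
  · rintro ⟨S, hdom, hdis⟩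
    refine ⟨?_, ?_, ?_⟩
    · -- Twin-free
      intro u v huv
      constructor
      · intro h
        have := hdis u v huv
        rw [h, symmDiff_self] at this
        simp at this
      · intro h
        -- u, v not adjacent
        have hna : ¬ G.Adj u v := by
          intro hadj
          have : u ∈ G.neighborSet v := hadj.symm
          rw [← h] at this
          exact G.irrefl this
        have hsub : symmDiff (closedNbhd G u ∩ S) (closedNbhd G v ∩ S) ⊆ {u, v} := by
          intro w hw
          rcases Set.mem_symmDiff.mp hw with ⟨⟨hw1, hwS⟩, hw2⟩ | ⟨⟨hw1, hwS⟩, hw2⟩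
          · rcases mem_closedNbhd'.mp hw1 with rfl | hadj'
            · exact Or.inl rfl
            · have hwv : w ∈ G.neighborSet v := h ▸ (hadj' : w ∈ G.neighborSet u)
              exact absurd ⟨Set.mem_insert_iff.mpr (Or.inr hwv), hwS⟩ hw2
          · rcases mem_closedNbhd'.mp hw1 with rfl | hadj'
            · exact Or.inr rfl
            · have hwu : w ∈ G.neighborSet u := h.symm ▸ (hadj' : w ∈ G.neighborSet v)
              exact absurd ⟨Set.mem_insert_iff.mpr (Or.inr hwu), hwS⟩ hw2
        have hle : (symmDiff (closedNbhd G u ∩ S) (closedNbhd G v ∩ S)).ncard ≤ 2 := by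
          calc (symmDiff (closedNbhd G u ∩ S) (closedNbhd G v ∩ S)).ncard
              ≤ ({u, v} : Set V).ncard := Set.ncard_le_ncard hsub (Set.toFinite _)
            _ ≤ 2 := Set.ncard_insert_le _ _ |>.trans (by simp)
        have := hdis u v huv
        omega
    · -- min degree ≥ 2
      intro v
      have h1 := hdom v
      have h2 : (closedNbhd G v ∩ S).ncard ≤ (closedNbhd G v).ncard :=
        Set.ncard_le_ncard (Set.inter_subset_left) (Set.toFinite _)
      have h3 := closedNbhd_ncard G v
      omega
    · -- no adjacent degree-2 pair
      rintro u v hadj ⟨hu2, hv2⟩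
      obtain ⟨a, b, hab, hNu⟩ := Set.ncard_eq_two.mp hu2
      obtain ⟨c, d, hcd, hNv⟩ := Set.ncard_eq_two.mp hv2
      have hvNu : v ∈ ({a, b} : Set V) := hNu ▸ (hadj : v ∈ G.neighborSet u)
      have huNv : u ∈ ({c, d} : Set V) := hNv ▸ (hadj.symm : u ∈ G.neighborSet v)
      rw [Set.mem_insert_iff, Set.mem_singleton_iff] at hvNu huNv
      obtain ⟨a', hNu', ha'v⟩ : ∃ a', G.neighborSet u = {v, a'} ∧ a' ≠ v := by
        rcases hvNu with rfl | rfl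
        · exact ⟨b, hNu, Ne.symm hab⟩
        · exact ⟨a, by rw [hNu, Set.pair_comm], hab⟩
      obtain ⟨b', hNv', hb'u⟩ : ∃ b', G.neighborSet v = {u, b'} ∧ b' ≠ u := by
        rcases huNv with rfl | rfl
        · exact ⟨d, hNv, Ne.symm hcd⟩
        · exact ⟨c, by rw [hNv, Set.pair_comm], hcd⟩
      have hua' : G.Adj u a' := by
        have : a' ∈ G.neighborSet u := by rw [hNu']; exact Set.mem_insert_iff.mpr (Or.inr rfl)
        exact this
      have hvb' : G.Adj v b' := by
        have : b' ∈ G.neighborSet v := by rw [hNv']; exact Set.mem_insert_iff.mpr (Or.inr rfl)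
        exact this
      have hsub : symmDiff (closedNbhd G u ∩ S) (closedNbhd G v ∩ S) ⊆ {a', b'} := by
        intro w hw
        rcases Set.mem_symmDiff.mp hw with ⟨⟨hw1, hwS⟩, hw2⟩ | ⟨⟨hw1, hwS⟩, hw2⟩
        · rcases mem_closedNbhd'.mp hw1 with rfl | hadj'
          · exact absurd ⟨mem_closedNbhd'.mpr (Or.inr hadj.symm), hwS⟩ hw2
          · have : w ∈ ({v, a'} : Set V) := hNu' ▸ (hadj' : w ∈ G.neighborSet u)
            rcases Set.mem_insert_iff.mp this with rfl | hwa
            · exact absurd ⟨mem_closedNbhd'.mpr (Or.inl rfl), hwS⟩ hw2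
            · exact Or.inl (Set.mem_singleton_iff.mp hwa)
        · rcases mem_closedNbhd'.mp hw1 with rfl | hadj'
          · exact absurd ⟨mem_closedNbhd'.mpr (Or.inr hadj), hwS⟩ hw2
          · have : w ∈ ({u, b'} : Set V) := hNv' ▸ (hadj' : w ∈ G.neighborSet v)
            rcases Set.mem_insert_iff.mp this with rfl | hwb
            · exact absurd ⟨mem_closedNbhd'.mpr (Or.inl rfl), hwS⟩ hw2
            · exact Or.inr hwb
      have hle : (symmDiff (closedNbhd G u ∩ S) (closedNbhd G v ∩ S)).ncard ≤ 2 := by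
        calc (symmDiff (closedNbhd G u ∩ S) (closedNbhd G v ∩ S)).ncard
            ≤ ({a', b'} : Set V).ncard := Set.ncard_le_ncard hsub (Set.toFinite _)
          _ ≤ 2 := Set.ncard_insert_le _ _ |>.trans (by simp)
      have := hdis u v hadj.ne
      omega
  · rintro ⟨htf, hdeg, h22⟩
    refine ⟨Set.univ, ?_, ?_⟩
    · intro v
      rw [Set.inter_univ, closedNbhd_ncard]
      have := hdeg v
      omega
    · intro u v huv
      rw [Set.inter_univ, Set.inter_univ]
      by_cases hadj : G.Adj u v
      · -- adjacent case
        set A := G.neighborSet u \ {v} with hA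
        set B := G.neighborSet v \ {u} with hB
        have hAsub : A ⊆ symmDiff (closedNbhd G u) (closedNbhd G v) := by
          intro w ⟨hw1, hw2⟩
          apply Set.mem_symmDiff.mpr
          left
          refine ⟨mem_closedNbhd'.mpr (Or.inr hw1), ?_⟩
          intro hw
          rcases mem_closedNbhd'.mp hw with rfl | hadj'
          · exact hw2 rfl
          · exact tri_free hT hadj hw1 hadj'
        have hBsub : B ⊆ symmDiff (closedNbhd G u) (closedNbhd G v) := by
          intro w ⟨hw1, hw2⟩
          apply Set.mem_symmDiff.mpr
          right
          refine ⟨mem_closedNbhd'.mpr (Or.inr hw1), ?_⟩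
          intro hw
          rcases mem_closedNbhd'.mp hw with rfl | hadj'
          · exact hw2 rfl
          · exact tri_free hT hadj hadj' hw1
        have hdisj : Disjoint A B := by
          rw [Set.disjoint_left]
          rintro w ⟨hw1, _⟩ ⟨hw2, _⟩
          exact tri_free hT hadj hw1 hw2
        have hAcard : A.ncard = (G.neighborSet u).ncard - 1 :=
          Set.ncard_diff_singleton_of_mem hadj
        have hBcard : B.ncard = (G.neighborSet v).ncard - 1 :=
          Set.ncard_diff_singleton_of_mem hadj.symm
        have hUcard : (A ∪ B).ncard = A.ncard + B.ncard :=
          Set.ncard_union_eq hdisj (Set.toFinite _) (Set.toFinite _)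
        have hle : (A ∪ B).ncard ≤ (symmDiff (closedNbhd G u) (closedNbhd G v)).ncard :=
          Set.ncard_le_ncard (Set.union_subset hAsub hBsub) (Set.toFinite _)
        have hdu := hdeg u
        have hdv := hdeg v
        have h5 := h22 u v hadj
        omega
      · -- non-adjacent case
        have hne : G.neighborSet u ≠ G.neighborSet v := (htf u v huv).2
        obtain ⟨w, hw⟩ : (symmDiff (G.neighborSet u) (G.neighborSet v)).Nonempty := by
          rw [Set.nonempty_iff_ne_empty]
          simpa [symmDiff_eq_bot] using hne
        have hwu : w ≠ u := by
          rintro rfl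
          rcases Set.mem_symmDiff.mp hw with ⟨h1, _⟩ | ⟨h1, _⟩
          · exact G.irrefl h1
          · exact hadj (G.adj_symm h1)
        have hwv : w ≠ v := by
          rintro rfl
          rcases Set.mem_symmDiff.mp hw with ⟨h1, _⟩ | ⟨h1, _⟩
          · exact hadj h1
          · exact G.irrefl h1
        have hsub : ({u, v, w} : Set V) ⊆ symmDiff (closedNbhd G u) (closedNbhd G v) := by
          intro x hx
          rcases hx with rfl | rfl | rfl
          · apply Set.mem_symmDiff.mpr
            left
            refine ⟨Set.mem_insert _ _, ?_⟩
            intro hx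
            rcases mem_closedNbhd'.mp hx with rfl | h
            · exact huv rfl
            · exact hadj (G.adj_symm h)
          · apply Set.mem_symmDiff.mpr
            right
            refine ⟨Set.mem_insert _ _, ?_⟩
            intro hx
            rcases mem_closedNbhd'.mp hx with rfl | h
            · exact huv rfl
            · exact hadj h
          · rcases Set.mem_symmDiff.mp hw with ⟨h1, h2⟩ | ⟨h1, h2⟩
            · apply Set.mem_symmDiff.mpr
              left
              refine ⟨mem_closedNbhd'.mpr (Or.inr h1), ?_⟩
              intro hx
              rcases mem_closedNbhd'.mp hx with rfl | h
              · exact hwv rfl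
              · exact h2 h
            · apply Set.mem_symmDiff.mpr
              right
              refine ⟨mem_closedNbhd'.mpr (Or.inr h1), ?_⟩
              intro hx
              rcases mem_closedNbhd'.mp hx with rfl | h
              · exact hwu rfl
              · exact h2 h
        have h3 : ({u, v, w} : Set V).ncard = 3 := by
          rw [Set.ncard_insert_of_notMem (by simp [huv, hwu.symm]) (Set.toFinite _),
              Set.ncard_insert_of_notMem (by simp [hwv.symm]) (Set.toFinite _),
              Set.ncard_singleton]
        calc 3 = ({u, v, w} : Set V).ncard := h3.symm
          _ ≤ _ := Set.ncard_le_ncard hsub (Set.toFinite _)
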